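/- Let $X$ be a Moishezon manifold with $c_1(X)=0$ whose tangent bundle $TX$ is semistable with respect to every movable class. Let $\alpha$ be a class in the interior of the movable cone and let $0=\mathcal F_0\subsetneq\mathcal F_1\subsetneq\cdots\subsetneq\mathcal F_r = TX$ be a filtration with torsion-free successive quotients stable of the same $\alpha$-slope. Then $c_1(\mathcal F_{i+1}/\mathcal F_i)\cdot\beta = 0$ for every movable class $\beta$ sufficiently close to $\alpha$, and hence $c_1(\mathcal F_{i+1}/\mathcal F_i)=0$ in $N^1(X)_{\mathbb R}$ for all $i$. -/

import Mathlib

/- STATEMENT 3: Let `X` be Moishezon with `c₁(X) = 0`, `TX` semistable with respect to every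
movable class, `α` in the interior of the movable cone `Mov ⊂ N₁(X)_ℝ`, and
`0 = 𝓕₀ ⊊ 𝓕₁ ⊊ ⋯ ⊊ 𝓕ᵣ = TX` a filtration with torsion-free `α`-stable quotients of equal
`α`-slope.  Then `c₁(𝓕_{i+1}/𝓕ᵢ) ⋅ β = 0` for every movable `β` close to `α`, hence
`c₁(𝓕_{i+1}/𝓕ᵢ) = 0` in `N¹(X)_ℝ`.  Here `N₁(X)_ℝ` is a finite-dimensional normed real vector
space `N1`, the first Chern classes of the graded pieces are the linear functionals
`c i = c₁(𝓕_{i+1}/𝓕ᵢ) ⋅ (–)` on `N1`, semistability of `TX` (with `c₁(TX)=0`) gives that each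
partial sum `c₁(𝓕_k) ⋅ β = ∑_{i<k} c i β` is `≤ 0` for all movable `β`, and all pieces have
`α`-slope zero. -/
theorem chern_classes_of_graded_pieces_vanish
    {N1 : Type*} [NormedAddCommGroup N1] [NormedSpace ℝ N1]
    [FiniteDimensional ℝ N1]
    (Mov : Set N1) (hcone : Convex ℝ Mov)
    (α : N1) (hα : α ∈ interior Mov)
    (r : ℕ) (c : Fin r → (N1 →ₗ[ℝ] ℝ))
    -- semistability of `TX` w.r.t. every movable class, applied to the subsheaves `𝓕_k`:
    (hss : ∀ β ∈ Mov, ∀ k : ℕ, k ≤ r → ∑ i ∈ Finset.univ.filter (fun i : Fin r => (i : ℕ) < k), c i β ≤ 0)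
    -- the graded pieces all have `α`-slope zero:
    (hα0 : ∀ i, c i α = 0) :
    (∃ ε > 0, ∀ β ∈ Mov, ‖β - α‖ < ε → ∀ i, c i β = 0) ∧ ∀ i, c i = 0 := by
  obtain ⟨ε, hε, hball⟩ := Metric.isOpen_iff.mp isOpen_interior α hα
  have hballMov : Metric.ball α ε ⊆ Mov := hball.trans interior_subset
  have key : ∀ β ∈ Mov, ‖β - α‖ < ε → ∀ i, c i β = 0 := by
    intro β hβ hd i
    -- the reflected class 2α - β is also movable
    have hγmem : (2:ℝ) • α - β ∈ Mov := by
      apply hballMov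
      rw [Metric.mem_ball, dist_eq_norm]
      have h : (2:ℝ) • α - β - α = -(β - α) := by module
      rw [h, norm_neg]; exact hd
    -- partial sums vanish at β
    have hS : ∀ k, k ≤ r →
        ∑ j ∈ Finset.univ.filter (fun j : Fin r => (j : ℕ) < k), c j β = 0 := by
      intro k hk
      have h1 := hss β hβ k hk
      have h2 := hss _ hγmem k hk
      have h3 : ∑ j ∈ Finset.univ.filter (fun j : Fin r => (j : ℕ) < k), c j ((2:ℝ) • α - β)
          = - ∑ j ∈ Finset.univ.filter (fun j : Fin r => (j : ℕ) < k), c j β := by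
        rw [← Finset.sum_neg_distrib]
        refine Finset.sum_congr rfl fun j _ => ?_
        simp [map_sub, map_smul, hα0 j]
      rw [h3] at h2
      linarith
    have hsucc : (i : ℕ) + 1 ≤ r := i.is_lt
    have h1 := hS ((i : ℕ) + 1) hsucc
    have h2 := hS (i : ℕ) (le_of_lt i.is_lt)
    have hfilter : Finset.univ.filter (fun j : Fin r => (j : ℕ) < (i : ℕ) + 1)
        = insert i (Finset.univ.filter (fun j : Fin r => (j : ℕ) < (i : ℕ))) := by
      ext j
      simp [Fin.ext_iff]
      omega
    rw [hfilter, Finset.sum_insert (by simp)] at h1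
    linarith
  refine ⟨⟨ε, hε, key⟩, ?_⟩
  intro i
  ext v
  have ht : (0:ℝ) < ε / (2 * (‖v‖ + 1)) := by positivity
  set t : ℝ := ε / (2 * (‖v‖ + 1)) with htdef
  have hnorm : ‖α + t • v - α‖ < ε := by
    have h1 : α + t • v - α = t • v := by module
    rw [h1, norm_smul, Real.norm_eq_abs, abs_of_pos ht]
    have hv : ‖v‖ < ‖v‖ + 1 := by linarith
    calc t * ‖v‖ ≤ t * (‖v‖ + 1) := by nlinarith [norm_nonneg v]
      _ = ε / 2 := by
          field_simp [htdef]
          have hk : t * (2 * (‖v‖ + 1)) = ε := by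
            rw [htdef]; exact div_mul_cancel₀ ε (by positivity)
          linear_combination hk
      _ < ε := by linarith
  have hmem : α + t • v ∈ Mov := hballMov (by rwa [Metric.mem_ball, dist_eq_norm])
  have h0 := key _ hmem hnorm i
  rw [map_add, map_smul, hα0 i, smul_eq_mul] at h0
  have : c i v = 0 := by
    rcases mul_eq_zero.mp (by linarith : t * c i v = 0) with h | h
    · exact absurd h (ne_of_gt ht)
    · exact h
  simpa using this
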